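/- Let R be a commutative noetherian ring and ℱ₁, ℱ₂ filters of ideals of R. Then the Gabriel product ℱ₁ * ℱ₂ (defined by I ∈ ℱ₁ * ℱ₂ iff there exists I₁ ∈ ℱ₁ such that a⁻¹I ∈ ℱ₂ for every a ∈ I₁) equals the set of ideals I of R such that I₁I₂ ⊆ I for some I₁ ∈ ℱ₁ and I₂ ∈ ℱ₂. -/

import Mathlib

/-- Let `R` be a commutative noetherian ring and `ℱ₁`, `ℱ₂` filters of ideals of `R`.
The Gabriel product `ℱ₁ * ℱ₂ = {I | ∃ I₁ ∈ ℱ₁, ∀ a ∈ I₁, a⁻¹I ∈ ℱ₂}` equals the set of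
ideals `I` such that `I₁ * I₂ ⊆ I` for some `I₁ ∈ ℱ₁` and `I₂ ∈ ℱ₂`. -/
theorem gabriel_product_eq (R : Type*) [CommRing R] [IsNoetherianRing R]
    (F₁ F₂ : Set (Ideal R))
    (htop₁ : ⊤ ∈ F₁) (hup₁ : ∀ I J : Ideal R, I ∈ F₁ → I ≤ J → J ∈ F₁)
    (hinf₁ : ∀ I J : Ideal R, I ∈ F₁ → J ∈ F₁ → I ⊓ J ∈ F₁)
    (htop₂ : ⊤ ∈ F₂) (hup₂ : ∀ I J : Ideal R, I ∈ F₂ → I ≤ J → J ∈ F₂)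
    (hinf₂ : ∀ I J : Ideal R, I ∈ F₂ → J ∈ F₂ → I ⊓ J ∈ F₂) :
    {I : Ideal R | ∃ I₁ ∈ F₁, ∀ a ∈ I₁, Submodule.comap (LinearMap.mulLeft R a) I ∈ F₂}
      = {I : Ideal R | ∃ I₁ ∈ F₁, ∃ I₂ ∈ F₂, I₁ * I₂ ≤ I} := by
  classical
  ext I
  simp only [Set.mem_setOf_eq]
  constructor
  · rintro ⟨I₁, hI₁, h⟩
    obtain ⟨s, hs⟩ := (isNoetherianRing_iff_ideal_fg R).mp ‹_› I₁
    refine ⟨I₁, hI₁, s.inf fun a => Submodule.comap (LinearMap.mulLeft R a) I, ?_, ?_⟩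
    · have : ∀ t : Finset R, ↑t ⊆ (I₁ : Set R) →
          t.inf (fun a => Submodule.comap (LinearMap.mulLeft R a) I) ∈ F₂ := by
        intro t
        induction t using Finset.induction with
        | empty => intro _; simpa using htop₂
        | insert _ _ hx ih =>
          intro hsub
          rw [Finset.inf_insert]
          exact hinf₂ _ _ (h _ (hsub (Finset.mem_insert_self _ _)))
            (ih fun a ha => hsub (Finset.mem_insert_of_mem ha))
      exact this s (by rw [← hs]; exact Ideal.subset_span)
    · rw [Ideal.mul_le]
      intro a ha b hb
      rw [← hs] at ha
      refine Submodule.span_induction ?_ ?_ ?_ ?_ ha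
      · intro x hx
        have := Finset.inf_le (f := fun a => Submodule.comap (LinearMap.mulLeft R a) I)
          (Finset.mem_coe.mp hx)
        exact this hb
      · simp
      · intro x y _ _ hx hy
        simpa [add_mul] using I.add_mem hx hy
      · intro r x _ hx
        simpa [smul_mul_assoc, mul_assoc] using I.smul_mem r hx
  · rintro ⟨I₁, hI₁, I₂, hI₂, hle⟩
    refine ⟨I₁, hI₁, fun a ha => hup₂ I₂ _ hI₂ fun b hb => ?_⟩
    exact hle (Ideal.mul_mem_mul ha hb)
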